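/- Let D ⊆ ℝ^l be an unbounded open convex set and let v ∈ ℝ^l be a unit vector with S_∞(D) = {v, −v}. Let H be the orthogonal complement of the line ℝ·v in ℝ^l. Then Ω := D ∩ H is a bounded convex set and D = {ω + t•v : ω ∈ Ω, t ∈ ℝ}. -/

import Mathlib

open Set Metric

/-- The set of directions at infinity of `D ⊆ ℝ^l`. -/
def directionsAtInfinity (l : ℕ) (D : Set (EuclideanSpace ℝ (Fin l))) :
    Set (EuclideanSpace ℝ (Fin l)) :=
  {v | ‖v‖ = 1 ∧ ∃ x ∈ D, ∀ t : ℝ, 0 ≤ t → x + t • v ∈ D}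

lemma ray_invariance {l : ℕ} {D : Set (EuclideanSpace ℝ (Fin l))}
    (hD_open : IsOpen D) (hD_conv : Convex ℝ D)
    {w x : EuclideanSpace ℝ (Fin l)} (hx : x ∈ D)
    (hray : ∀ t : ℝ, 0 ≤ t → x + t • w ∈ D)
    {y : EuclideanSpace ℝ (Fin l)} (hy : y ∈ D) {t : ℝ} (ht : 0 ≤ t) :
    y + t • w ∈ D := by
  rcases ht.eq_or_lt with rfl | ht'
  · simpa using hy
  obtain ⟨ε, hε, hball⟩ := Metric.isOpen_iff.mp hD_open y hy
  set c := ‖y - x‖ with hc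
  have hc0 : 0 ≤ c := norm_nonneg _
  set lam := ε / (ε + c + 1) with hlam
  have hden : 0 < ε + c + 1 := by linarith
  have hlam0 : 0 < lam := div_pos hε hden
  have hlam1 : lam < 1 := by rw [hlam, div_lt_one hden]; linarith
  have h1lam : (0:ℝ) < 1 - lam := by linarith
  set s := lam / (1 - lam) with hs
  have hs_eq : s = ε / (c + 1) := by
    rw [hs, hlam]
    field_simp
    linear_combination mul_inv_cancel₀ (show (1+c:ℝ) ≠ 0 by linarith)
  set y' := y + s • (y - x) with hy'def
  have hy'mem : y' ∈ D := by
    apply hball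
    have h1 : dist y' y = s * c := by
      rw [dist_eq_norm, hy'def]
      simp [norm_smul, abs_of_nonneg (by positivity : (0:ℝ) ≤ s), hc]
    rw [mem_ball, h1, hs_eq]
    rw [div_mul_eq_mul_div, div_lt_iff₀ (by linarith : (0:ℝ) < c + 1)]
    nlinarith
  have hp : x + (t / lam) • w ∈ D := hray _ (by positivity)
  have hcomb := hD_conv hy'mem hp h1lam.le hlam0.le (by ring)
  have heq : (1 - lam) • y' + lam • (x + (t / lam) • w) = y + t • w := by
    rw [hy'def, hs]
    match_scalars <;> field_simp <;> ring
  rwa [heq] at hcomb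

lemma line_invariance {l : ℕ} {D : Set (EuclideanSpace ℝ (Fin l))}
    (hD_open : IsOpen D) (hD_conv : Convex ℝ D)
    {v : EuclideanSpace ℝ (Fin l)}
    (hvp : ∃ x ∈ D, ∀ t : ℝ, 0 ≤ t → x + t • v ∈ D)
    (hvm : ∃ x ∈ D, ∀ t : ℝ, 0 ≤ t → x + t • (-v) ∈ D)
    {y : EuclideanSpace ℝ (Fin l)} (hy : y ∈ D) (t : ℝ) :
    y + t • v ∈ D := by
  rcases le_or_gt 0 t with h | h
  · obtain ⟨x, hx, hray⟩ := hvp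
    exact ray_invariance hD_open hD_conv hx hray hy h
  · obtain ⟨x, hx, hray⟩ := hvm
    have := ray_invariance hD_open hD_conv hx hray hy (t := -t) (by linarith)
    simpa [smul_neg] using this

/-- If `D ⊆ ℝ^l` is an unbounded open convex set whose only directions at
infinity are `v` and `-v`, and `H = (ℝ·v)ᗮ`, then `Ω = D ∩ H` is a bounded convex set and
`D = {ω + t • v : ω ∈ Ω, t ∈ ℝ}`. -/
theorem decomposition_two_ends (l : ℕ) (hl : 1 ≤ l)
    (D : Set (EuclideanSpace ℝ (Fin l))) (hD_open : IsOpen D) (hD_conv : Convex ℝ D)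
    (hD_unb : ¬ Bornology.IsBounded D)
    (v : EuclideanSpace ℝ (Fin l)) (hv : ‖v‖ = 1)
    (hdir : directionsAtInfinity l D = {v, -v}) :
    Bornology.IsBounded (D ∩ ((ℝ ∙ v)ᗮ : Submodule ℝ (EuclideanSpace ℝ (Fin l))))
    ∧ Convex ℝ (D ∩ ((ℝ ∙ v)ᗮ : Submodule ℝ (EuclideanSpace ℝ (Fin l))))
    ∧ D = {z | ∃ ω ∈ D ∩ ((ℝ ∙ v)ᗮ : Submodule ℝ (EuclideanSpace ℝ (Fin l))),
              ∃ t : ℝ, z = ω + t • v} := by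
  have hv_mem : v ∈ directionsAtInfinity l D := by rw [hdir]; left; rfl
  have hnv_mem : -v ∈ directionsAtInfinity l D := by rw [hdir]; right; rfl
  obtain ⟨-, x₁, hx₁, hray₁⟩ := hv_mem
  obtain ⟨-, x₂, hx₂, hray₂⟩ := hnv_mem
  have hline : ∀ y ∈ D, ∀ t : ℝ, y + t • v ∈ D :=
    fun y hy t => line_invariance hD_open hD_conv ⟨x₁, hx₁, hray₁⟩ ⟨x₂, hx₂, hray₂⟩ hy t
  have hconvΩ : Convex ℝ (D ∩ ((ℝ ∙ v)ᗮ : Submodule ℝ (EuclideanSpace ℝ (Fin l)))) :=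
    hD_conv.inter (Submodule.convex _)
  have hdecomp : D = {z | ∃ ω ∈ D ∩ ((ℝ ∙ v)ᗮ : Submodule ℝ (EuclideanSpace ℝ (Fin l))),
      ∃ t : ℝ, z = ω + t • v} := by
    ext z
    constructor
    · intro hz
      refine ⟨z - (inner ℝ z v : ℝ) • v, ⟨?_, ?_⟩, (inner ℝ z v : ℝ), by abel⟩
      · have := hline z hz (-(inner ℝ z v : ℝ))
        simpa [sub_eq_add_neg, neg_smul] using this
      · rw [SetLike.mem_coe, Submodule.mem_orthogonal_singleton_iff_inner_right]
        rw [inner_sub_right, real_inner_smul_right, real_inner_self_eq_norm_sq, hv,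
          real_inner_comm]
        ring
    · rintro ⟨ω, ⟨hω, -⟩, t, rfl⟩
      exact hline ω hω t
  refine ⟨?_, hconvΩ, hdecomp⟩
  -- boundedness
  by_contra hub
  obtain ⟨ε, hε, hball⟩ := Metric.isOpen_iff.mp hD_open x₁ hx₁
  have hseq : ∀ n : ℕ, ∃ ω, ω ∈ D ∩ ((ℝ ∙ v)ᗮ : Submodule ℝ (EuclideanSpace ℝ (Fin l)))
      ∧ (n : ℝ) + 1 ≤ ‖ω - x₁‖ := by
    intro n
    by_contra h
    push_neg at h
    apply hub
    apply (Metric.isBounded_closedBall (x := x₁) (r := n + 1)).subset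
    intro ω hω
    rw [Metric.mem_closedBall, dist_eq_norm]
    exact (h ω hω).le
  choose ω hωmem hωnorm using hseq
  set R : ℕ → ℝ := fun n => ‖ω n - x₁‖ with hR
  have hRpos : ∀ n, 0 < R n := fun n => lt_of_lt_of_le (by positivity) (hωnorm n)
  set u : ℕ → EuclideanSpace ℝ (Fin l) := fun n => (R n)⁻¹ • (ω n - x₁) with hu
  have hunorm : ∀ n, ‖u n‖ = 1 := by
    intro n
    rw [hu]
    simp only [norm_smul, norm_inv, Real.norm_eq_abs, abs_of_pos (hRpos n)]
    exact inv_mul_cancel₀ (hRpos n).ne'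
  have husphere : ∀ n, u n ∈ sphere (0 : EuclideanSpace ℝ (Fin l)) 1 := by
    intro n; rw [mem_sphere, dist_zero_right]; exact hunorm n
  obtain ⟨u₀, hu₀, φ, hφ, hconv⟩ := (isCompact_sphere 0 1).tendsto_subseq husphere
  have hu₀norm : ‖u₀‖ = 1 := by rwa [mem_sphere, dist_zero_right] at hu₀
  have hωn_eq : ∀ n, ω n = x₁ + R n • u n := by
    intro n
    rw [hu, smul_smul, mul_inv_cancel₀ (hRpos n).ne', one_smul]
    abel
  -- u₀ is a direction at infinity
  have hu₀dir : u₀ ∈ directionsAtInfinity l D := by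
    refine ⟨hu₀norm, x₁, hx₁, ?_⟩
    intro t ht
    rcases ht.eq_or_lt with rfl | ht'
    · simpa using hx₁
    have hδ : 0 < ε / (2 * (t + 1)) := by positivity
    have hev := (hconv.eventually (Metric.ball_mem_nhds u₀ hδ)).and
      (Filter.eventually_ge_atTop ⌈2 * t⌉₊)
    obtain ⟨k, hk1, hk2⟩ := hev.exists
    set n := φ k with hn
    have hRn : 2 * t ≤ R n := by
      calc 2 * t ≤ (⌈2 * t⌉₊ : ℝ) := Nat.le_ceil _
        _ ≤ (k : ℝ) := by exact_mod_cast hk2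
        _ ≤ (φ k : ℝ) := by exact_mod_cast hφ.le_apply
        _ ≤ (φ k : ℝ) + 1 := by linarith
        _ ≤ R n := hωnorm n
    have hlam0 : 0 < t / R n := div_pos ht' (hRpos n)
    have hlamhalf : t / R n ≤ 1/2 := by
      rw [div_le_iff₀ (hRpos n)]
      linarith
    have h1lam : (0:ℝ) < 1 - t / R n := by linarith
    have hdist : ‖u n - u₀‖ < ε / (2 * (t + 1)) := by
      have h' := hk1
      rw [dist_eq_norm] at h'
      simpa [hn] using h'
    set y' := x₁ + (t / (1 - t / R n)) • (u₀ - u n) with hy'def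
    have hy'mem : y' ∈ D := by
      apply hball
      rw [mem_ball, hy'def, dist_eq_norm]
      have h1 : x₁ + (t / (1 - t / R n)) • (u₀ - u n) - x₁
          = (t / (1 - t / R n)) • (u₀ - u n) := by abel
      rw [h1, norm_smul, Real.norm_eq_abs, abs_of_pos (by positivity)]
      have h2 : t / (1 - t / R n) ≤ 2 * t := by
        rw [div_le_iff₀ h1lam]
        nlinarith
      have h3 : ‖u₀ - u n‖ < ε / (2 * (t + 1)) := by
        rw [norm_sub_rev]; exact hdist
      have hA : ε / (2 * (t + 1)) * (2 * (t + 1)) = ε := div_mul_cancel₀ ε (by positivity)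
      calc t / (1 - t / R n) * ‖u₀ - u n‖
          ≤ 2 * t * ‖u₀ - u n‖ := mul_le_mul_of_nonneg_right h2 (norm_nonneg _)
        _ < 2 * t * (ε / (2 * (t + 1))) := by
            exact mul_lt_mul_of_pos_left h3 (by positivity)
        _ < ε := by nlinarith
    have e1 : (1 - t / R n) * (t / (1 - t / R n)) = t := mul_div_cancel₀ t h1lam.ne'
    have e2 : t / R n * R n = t := div_mul_cancel₀ t (hRpos n).ne'
    have hcomb := hD_conv hy'mem (hωmem n).1 h1lam.le hlam0.le (by ring)
    have heq : (1 - t / R n) • y' + (t / R n) • ω n = x₁ + t • u₀ := by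
      calc (1 - t / R n) • y' + (t / R n) • ω n
          = (1 - t / R n) • x₁ + ((1 - t / R n) * (t / (1 - t / R n))) • (u₀ - u n)
            + ((t / R n) • x₁ + (t / R n * R n) • u n) := by
            rw [hy'def, hωn_eq n, smul_add, smul_add, smul_smul, smul_smul]
        _ = x₁ + t • u₀ := by rw [e1, e2]; module
    rwa [heq] at hcomb
  -- contradiction: u₀ ⟂ v but u₀ ∈ {v, -v}
  have hu₀set : u₀ = v ∨ u₀ = -v := by
    rw [hdir] at hu₀dir
    simpa [Set.mem_insert_iff] using hu₀dir
  have hinner : (inner ℝ u₀ v : ℝ) = 0 := by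
    have h1 : Filter.Tendsto (fun k => (inner ℝ (u (φ k)) v : ℝ)) Filter.atTop
        (nhds (inner ℝ u₀ v : ℝ)) := by
      have := Filter.Tendsto.inner (𝕜 := ℝ) hconv
        (tendsto_const_nhds (x := v) (f := Filter.atTop))
      simpa [Function.comp] using this
    have h2 : Filter.Tendsto (fun k => (inner ℝ (u (φ k)) v : ℝ)) Filter.atTop (nhds 0) := by
      apply squeeze_zero_norm (a := fun k : ℕ => 1 / ((k : ℝ) + 1) * ‖x₁‖)
      · intro k
        have hortho : (inner ℝ (ω (φ k)) v : ℝ) = 0 := by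
          have h' := (hωmem (φ k)).2
          rw [SetLike.mem_coe, Submodule.mem_orthogonal_singleton_iff_inner_right] at h'
          rw [real_inner_comm]
          exact h'
        have hval : (inner ℝ (u (φ k)) v : ℝ) = (R (φ k))⁻¹ * (0 - inner ℝ x₁ v) := by
          have huk : u (φ k) = (R (φ k))⁻¹ • (ω (φ k) - x₁) := rfl
          rw [huk, real_inner_smul_left, inner_sub_left, hortho]
        rw [hval, Real.norm_eq_abs, abs_mul, abs_inv, abs_of_pos (hRpos _)]
        have hk1 : ((k : ℝ) + 1) ≤ R (φ k) := by
          have h5 : (k : ℝ) ≤ (φ k : ℝ) := by exact_mod_cast hφ.le_apply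
          linarith [hωnorm (φ k)]
        have hb1 : (R (φ k))⁻¹ ≤ 1 / ((k : ℝ) + 1) := by
          rw [one_div]
          exact inv_anti₀ (by positivity) hk1
        have hb2 : |0 - (inner ℝ x₁ v : ℝ)| ≤ ‖x₁‖ := by
          rw [zero_sub, abs_neg]
          calc |(inner ℝ x₁ v : ℝ)| ≤ ‖x₁‖ * ‖v‖ := abs_real_inner_le_norm x₁ v
            _ = ‖x₁‖ := by rw [hv, mul_one]
        exact mul_le_mul hb1 hb2 (abs_nonneg _) (by positivity)
      · have := tendsto_one_div_add_atTop_nhds_zero_nat.mul_const ‖x₁‖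
        simpa using this
    exact tendsto_nhds_unique h1 h2
  rcases hu₀set with rfl | rfl
  · rw [real_inner_self_eq_norm_sq, hv] at hinner
    norm_num at hinner
  · rw [inner_neg_left, real_inner_self_eq_norm_sq, hv, neg_eq_zero] at hinner
    norm_num at hinner
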